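/- Let b ∈ ℚ, φ(x,y) = (y, x + y² + b), and suppose Q ∈ ℚ² is periodic for φ. Then the logarithmic Weil height of Q satisfies h(Q) ≤ (1/2)·h(b) + log 3, where h(Q) = h(x) + h(y) is bounded via: for every place v of ℚ, log⁺ max(|x|_v, |y|_v) ≤ (1/2)·log⁺|b|_v + log(3)_v, with (3)_v = 3 at the archimedean place and 1 at finite places. -/

import Mathlib

private lemma padicNorm_le_one_of_not_dvd_den {p : ℕ} [hp : Fact p.Prime] {q : ℚ}
    (h : ¬ p ∣ q.den) : padicNorm p q ≤ 1 := by
  rcases eq_or_ne q 0 with rfl | hq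
  · simp [padicNorm]
  rw [padicNorm.eq_zpow_of_nonzero hq]
  apply zpow_le_one_of_nonpos₀ (by exact_mod_cast hp.out.one_le)
  have h1 : padicValNat p q.den = 0 := padicValNat.eq_zero_of_not_dvd h
  have h2 : (0:ℤ) ≤ padicValInt p q.num := Int.ofNat_nonneg _
  rw [padicValRat_def, h1]
  omega

private lemma padicNorm_max_den_eq {p : ℕ} [hp : Fact p.Prime] (b : ℚ) :
    max (padicNorm p b) 1 = (p : ℚ) ^ (b.den.factorization p) := by
  rcases eq_or_ne b 0 with rfl | hb
  · simp [padicNorm]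
  by_cases hdvd : p ∣ b.den
  · have hnum : ¬ (p:ℤ) ∣ b.num := by
      intro hc
      have h1 : p ∣ b.num.natAbs := Int.natAbs_dvd_natAbs.mpr (by simpa using hc)
      have h2 : p ∣ Nat.gcd b.num.natAbs b.den := Nat.dvd_gcd h1 hdvd
      rw [b.reduced] at h2
      exact hp.out.one_lt.ne' (Nat.dvd_one.mp h2)
    have hval : padicValRat p b = -(b.den.factorization p : ℤ) := by
      rw [padicValRat_def, padicValInt.eq_zero_of_not_dvd hnum,
        Nat.factorization_def _ hp.out]
      ring
    have hnorm : padicNorm p b = (p:ℚ) ^ (b.den.factorization p) := by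
      rw [padicNorm.eq_zpow_of_nonzero hb, hval, neg_neg, zpow_natCast]
    rw [hnorm]
    exact max_eq_left (one_le_pow₀ (by exact_mod_cast hp.out.one_le))
  · rw [Nat.factorization_eq_zero_of_not_dvd hdvd, pow_zero]
    exact max_eq_right (padicNorm_le_one_of_not_dvd_den hdvd)

/-- nonarchimedean bound for a periodic sequence of the recurrence -/
private lemma seq_padic_bound {p : ℕ} [hp : Fact p.Prime] {b : ℚ} {s : ℕ → ℚ}
    (hrec : ∀ k, s (k+2) = s k + s (k+1)^2 + b) {M : ℚ}
    (hMle : ∀ k, padicNorm p (s k) ≤ M)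
    (hMex : ∃ i, padicNorm p (s (i+1)) = M) :
    max M 1 ^ 2 ≤ max (padicNorm p b) 1 := by
  rcases le_or_gt M 1 with hM | hM
  · rw [max_eq_right hM, one_pow]
    exact le_max_right _ _
  · rw [max_eq_left hM.le]
    by_contra hc
    push_neg at hc
    obtain ⟨i, hi⟩ := hMex
    have h1 : padicNorm p (s (i+1) ^ 2) = M ^ 2 := by
      rw [sq, padicNorm.mul, hi, sq]
    have hb : padicNorm p b < M ^ 2 := lt_of_le_of_lt (le_max_left _ _) hc
    have h2 : padicNorm p (s (i+1)^2 + b) = M ^ 2 := by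
      rw [padicNorm.add_eq_max_of_ne (by rw [h1]; exact hb.ne'), h1,
        max_eq_left hb.le]
    have h3 : s (i+1)^2 + b = s (i+2) - s i := by rw [hrec i]; ring
    have h4 : padicNorm p (s (i+2) - s i) ≤ M :=
      le_trans padicNorm.sub (max_le (hMle _) (hMle _))
    rw [← h3, h2] at h4
    nlinarith

/-- archimedean bound for a periodic sequence of the recurrence -/
private lemma seq_arch_bound {b : ℚ} {s : ℕ → ℚ}
    (hrec : ∀ k, s (k+2) = s k + s (k+1)^2 + b) {M : ℚ}
    (hMle : ∀ k, |s k| ≤ M) (hMex : ∃ i, |s (i+1)| = M) :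
    max M 1 ^ 2 ≤ 9 * max |b| 1 := by
  have hB : (1:ℚ) ≤ max |b| 1 := le_max_right _ _
  have hbB : |b| ≤ max |b| 1 := le_max_left _ _
  rcases le_or_gt M 1 with hM | hM
  · rw [max_eq_right hM, one_pow]; linarith
  · rw [max_eq_left hM.le]
    obtain ⟨i, hi⟩ := hMex
    have h1 : M ^ 2 ≤ 2 * M + max |b| 1 := by
      have h2 : |s (i+1)|^2 = |s (i+2) - s i - b| := by
        rw [← abs_pow]
        congr 1
        rw [hrec i]; ring
      have h3 : |s (i+2) - s i - b| ≤ |s (i+2)| + |s i| + |b| := by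
        calc |s (i+2) - s i - b| ≤ |s (i+2) - s i| + |b| := abs_sub _ _
        _ ≤ (|s (i+2)| + |s i|) + |b| := by
            have := abs_sub (s (i+2)) (s i)
            linarith
      have := hMle i
      have := hMle (i+2)
      rw [hi] at h2
      nlinarith
    nlinarith [sq_nonneg (2*M - 3)]

/-- a rational periodic point `Q = (x,y)` of `φ(x,y) = (y, x+y²+b)`
satisfies, at every place `v` of `ℚ`, `log⁺‖Q‖_v ≤ ½ log⁺|b|_v + log(3)_v`;
summing over all places gives `h(Q) ≤ ½ h(b) + log 3`. -/
theorem stmt7 (b : ℚ)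
    (φ : ℚ × ℚ → ℚ × ℚ) (hφ : ∀ P, φ P = (P.2, P.1 + P.2 ^ 2 + b))
    (x y : ℚ) (N : ℕ) (hN : 1 ≤ N) (hper : φ^[N] (x, y) = (x, y))
    (h : ℚ → ℝ) (hh : ∀ t : ℚ, h t = Real.log (max (|t.num| : ℝ) (t.den : ℝ))) :
    (∀ p : ℕ, p.Prime →
      Real.log (max ((padicNorm p x : ℝ)) (max ((padicNorm p y : ℝ)) 1)) ≤
        (1 / 2) * Real.log (max ((padicNorm p b : ℝ)) 1)) ∧
    (Real.log (max |(x : ℝ)| (max |(y : ℝ)| 1)) ≤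
      (1 / 2) * Real.log (max |(b : ℝ)| 1) + Real.log 3) ∧
    (Real.log (max |(x : ℝ)| (max |(y : ℝ)| 1)) +
      (∑' q : Nat.Primes,
        Real.log (max ((padicNorm (q : ℕ) x : ℝ)) (max ((padicNorm (q : ℕ) y : ℝ)) 1)))
      ≤ (1 / 2) * h b + Real.log 3) := by
  -- the orbit sequence
  set s : ℕ → ℚ := fun k => (φ^[k] (x, y)).1 with hs
  have hs0 : s 0 = x := rfl
  have hsnd : ∀ k, (φ^[k] (x, y)).2 = s (k + 1) := by
    intro k
    have h1 : φ^[k+1] (x, y) = φ (φ^[k] (x, y)) := Function.iterate_succ_apply' φ k (x, y)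
    simp only [hs, h1, hφ]
  have hs1 : s 1 = y := by
    have := hsnd 0
    simpa using this.symm
  have hrec : ∀ k, s (k + 2) = s k + s (k + 1) ^ 2 + b := by
    intro k
    have h1 : s (k + 2) = (φ^[k+1] (x, y)).2 := (hsnd (k + 1)).symm
    have h2 : φ^[k+1] (x, y) = φ (φ^[k] (x, y)) := Function.iterate_succ_apply' φ k (x, y)
    rw [h1, h2, hφ]
    simp only [hsnd k]
    rfl
  have hperk : ∀ k, s (k + N) = s k := by
    intro k
    simp only [hs, Function.iterate_add_apply, hper]
  have hmod : ∀ k, s k = s (k % N) := by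
    intro k
    have aux : ∀ j r, s (r + N * j) = s r := by
      intro j
      induction j with
      | zero => simp
      | succ n ih =>
        intro r
        have he : r + N * (n + 1) = (r + N * n) + N := by ring
        rw [he, hperk, ih]
    calc s k = s (k % N + N * (k / N)) := by rw [Nat.mod_add_div]
      _ = s (k % N) := aux _ _
  have hNpos : 0 < N := hN
  have hne : (Finset.range N).Nonempty := ⟨0, Finset.mem_range.mpr hNpos⟩
  -- part 1
  have part1 : ∀ p : ℕ, p.Prime →
      Real.log (max ((padicNorm p x : ℝ)) (max ((padicNorm p y : ℝ)) 1)) ≤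
        (1 / 2) * Real.log (max ((padicNorm p b : ℝ)) 1) := by
    intro p hp
    haveI : Fact p.Prime := ⟨hp⟩
    set M : ℚ := (Finset.range N).sup' hne (fun k => padicNorm p (s k)) with hM
    have hMle : ∀ k, padicNorm p (s k) ≤ M := by
      intro k
      rw [hmod k, hM]
      exact Finset.le_sup' (fun k => padicNorm p (s k)) (Finset.mem_range.mpr (Nat.mod_lt _ hNpos))
    have hMex : ∃ i, padicNorm p (s (i + 1)) = M := by
      obtain ⟨j, hjmem, hjeq⟩ := Finset.exists_mem_eq_sup' hne (fun k => padicNorm p (s k))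
      refine ⟨j + N - 1, ?_⟩
      have he : j + N - 1 + 1 = j + N := by omega
      rw [he, show s (j + N) = s j from by
        rw [hmod (j + N), hmod j, Nat.add_mod_right]]
      exact hjeq.symm
    have key : max M 1 ^ 2 ≤ max (padicNorm p b) 1 := seq_padic_bound hrec hMle hMex
    -- pass to ℝ and logs
    have hM1 : (1:ℚ) ≤ max M 1 := le_max_right _ _
    have hB1 : (1:ℚ) ≤ max (padicNorm p b) 1 := le_max_right _ _
    have hL : max ((padicNorm p x : ℝ)) (max ((padicNorm p y : ℝ)) 1) ≤ ((max M 1 : ℚ) : ℝ) := by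
      have h1 : padicNorm p x ≤ max M 1 := le_trans (hs0 ▸ hMle 0) (le_max_left _ _)
      have h2 : padicNorm p y ≤ max M 1 := le_trans (hs1 ▸ hMle 1) (le_max_left _ _)
      exact max_le (by exact_mod_cast h1) (max_le (by exact_mod_cast h2) (by exact_mod_cast hM1))
    have hcast : max ((padicNorm p b : ℝ)) 1 = ((max (padicNorm p b) 1 : ℚ) : ℝ) := by
      push_cast; ring_nf
    rw [hcast]
    have hlog1 : Real.log (max ((padicNorm p x : ℝ)) (max ((padicNorm p y : ℝ)) 1)) ≤
        Real.log ((max M 1 : ℚ) : ℝ) :=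
      Real.log_le_log (lt_of_lt_of_le one_pos (le_trans (le_max_right _ 1) (le_max_right _ _))) hL
    have hlog2 : Real.log ((max M 1 : ℚ) : ℝ) ≤
        (1 / 2) * Real.log ((max (padicNorm p b) 1 : ℚ) : ℝ) := by
      have h2 : ((max M 1 : ℚ) : ℝ) ^ 2 ≤ ((max (padicNorm p b) 1 : ℚ) : ℝ) := by
        exact_mod_cast key
      have h3 := Real.log_le_log (by positivity) h2
      rw [Real.log_pow] at h3
      push_cast at h3 ⊢
      linarith
    linarith
  have part2 : Real.log (max |(x : ℝ)| (max |(y : ℝ)| 1)) ≤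
      (1 / 2) * Real.log (max |(b : ℝ)| 1) + Real.log 3 := by
    set M : ℚ := (Finset.range N).sup' hne (fun k => |s k|) with hM
    have hMle : ∀ k, |s k| ≤ M := by
      intro k
      rw [hmod k, hM]
      exact Finset.le_sup' (fun k => |s k|) (Finset.mem_range.mpr (Nat.mod_lt _ hNpos))
    have hMex : ∃ i, |s (i + 1)| = M := by
      obtain ⟨j, hjmem, hjeq⟩ := Finset.exists_mem_eq_sup' hne (fun k => |s k|)
      refine ⟨j + N - 1, ?_⟩
      have he : j + N - 1 + 1 = j + N := by omega
      rw [he, show s (j + N) = s j from by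
        rw [hmod (j + N), hmod j, Nat.add_mod_right]]
      exact hjeq.symm
    have key : max M 1 ^ 2 ≤ 9 * max |b| 1 := seq_arch_bound hrec hMle hMex
    have hM1 : (1:ℚ) ≤ max M 1 := le_max_right _ _
    have hL : max |(x : ℝ)| (max |(y : ℝ)| 1) ≤ ((max M 1 : ℚ) : ℝ) := by
      have h1 : |x| ≤ max M 1 := le_trans (hs0 ▸ hMle 0) (le_max_left _ _)
      have h2 : |y| ≤ max M 1 := le_trans (hs1 ▸ hMle 1) (le_max_left _ _)
      refine max_le ?_ (max_le ?_ (by exact_mod_cast hM1))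
      · rw [← Rat.cast_abs]; exact_mod_cast h1
      · rw [← Rat.cast_abs]; exact_mod_cast h2
    have hlog1 : Real.log (max |(x : ℝ)| (max |(y : ℝ)| 1)) ≤ Real.log ((max M 1 : ℚ) : ℝ) :=
      Real.log_le_log (lt_of_lt_of_le one_pos (le_trans (le_max_right _ 1) (le_max_right _ _))) hL
    have hlog2 : Real.log ((max M 1 : ℚ) : ℝ) ≤
        (1 / 2) * Real.log (max |(b : ℝ)| 1) + Real.log 3 := by
      have h2 : ((max M 1 : ℚ) : ℝ) ^ 2 ≤ 9 * max |(b : ℝ)| 1 := by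
        have hc : ((max M 1 ^ 2 : ℚ) : ℝ) ≤ ((9 * max |b| 1 : ℚ) : ℝ) := by exact_mod_cast key
        push_cast at hc ⊢
        exact hc
      have hBpos : (0:ℝ) < max |(b : ℝ)| 1 := lt_of_lt_of_le one_pos (le_max_right _ _)
      have h3 := Real.log_le_log (by positivity) h2
      rw [Real.log_pow, Real.log_mul (by norm_num) hBpos.ne'] at h3
      have h9 : Real.log 9 = 2 * Real.log 3 := by
        rw [show (9:ℝ) = 3 ^ 2 by norm_num, Real.log_pow]
        push_cast; ring
      rw [h9] at h3
      push_cast at h3 ⊢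
      linarith
    linarith
  refine ⟨part1, part2, ?_⟩
  -- part 3
  have hbden : b.den ≠ 0 := b.pos.ne'
  set T : Finset ℕ := (x.den * y.den * b.den).primeFactors with hT
  set G : ℕ → ℝ := fun p => Real.log (max ((padicNorm p x : ℝ)) (max ((padicNorm p y : ℝ)) 1))
    with hG
  have hTprime : ∀ p ∈ T, p.Prime := fun p hp => Nat.prime_of_mem_primeFactors hp
  have hinj : Function.Injective
      (fun (a : {p // p ∈ T}) => (⟨a.1, hTprime a.1 a.2⟩ : Nat.Primes)) := by
    intro a c hac
    have h2 : ((⟨a.1, hTprime a.1 a.2⟩ : Nat.Primes) : ℕ) =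
        ((⟨c.1, hTprime c.1 c.2⟩ : Nat.Primes) : ℕ) := congrArg Subtype.val hac
    exact Subtype.ext h2
  set S' : Finset Nat.Primes := T.attach.map ⟨_, hinj⟩ with hS'
  have hmem : ∀ q : Nat.Primes, q ∈ S' ↔ (q : ℕ) ∈ T := by
    intro q
    constructor
    · intro hq
      obtain ⟨a, _, ha⟩ := Finset.mem_map.mp hq
      rw [← ha]
      exact a.2
    · intro hq
      exact Finset.mem_map.mpr ⟨⟨(q : ℕ), hq⟩, Finset.mem_attach _ _, Subtype.ext rfl⟩
  have hdenpos : 0 < x.den * y.den * b.den := by positivity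
  have hzero : ∀ q : Nat.Primes, q ∉ S' → G (q : ℕ) = 0 := by
    intro q hq
    haveI : Fact (q : ℕ).Prime := ⟨q.2⟩
    have hqT : (q : ℕ) ∉ T := fun hc => hq ((hmem q).mpr hc)
    have hnd : ¬ (q : ℕ) ∣ x.den * y.den * b.den := by
      intro hc
      exact hqT (Nat.mem_primeFactors.mpr ⟨q.2, hc, hdenpos.ne'⟩)
    have hx : padicNorm (q : ℕ) x ≤ 1 :=
      padicNorm_le_one_of_not_dvd_den (fun hc => hnd ((hc.mul_right y.den).mul_right b.den))
    have hy : padicNorm (q : ℕ) y ≤ 1 :=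
      padicNorm_le_one_of_not_dvd_den (fun hc => hnd ((hc.mul_left x.den).mul_right b.den))
    have e1 : max ((padicNorm (q : ℕ) y : ℝ)) 1 = 1 := max_eq_right (by exact_mod_cast hy)
    rw [hG]
    simp only []
    rw [e1, max_eq_right (by exact_mod_cast hx), Real.log_one]
  have htsum : (∑' q : Nat.Primes, G (q : ℕ)) = ∑ q ∈ S', G (q : ℕ) :=
    tsum_eq_sum (fun q hq => hzero q hq)
  have hsum_eq : ∑ q ∈ S', G (q : ℕ) = ∑ p ∈ T, G p := by
    rw [hS', Finset.sum_map]
    exact Finset.sum_attach T (fun p => G p)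
  have hbound : ∑ p ∈ T, G p ≤
      ∑ p ∈ T, (1 / 2) * Real.log ((p : ℝ) ^ (b.den.factorization p)) := by
    apply Finset.sum_le_sum
    intro p hp
    have hpp := hTprime p hp
    haveI : Fact p.Prime := ⟨hpp⟩
    have h1 := part1 p hpp
    have hc : max ((padicNorm p b : ℝ)) 1 = (p : ℝ) ^ (b.den.factorization p) := by
      have h2 := padicNorm_max_den_eq (p := p) b
      calc max ((padicNorm p b : ℝ)) 1 = ((max (padicNorm p b) 1 : ℚ) : ℝ) := by
            push_cast; ring
        _ = _ := by rw [h2]; push_cast; ring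
    rw [hc] at h1
    exact h1
  have hlogsum : ∑ p ∈ T, Real.log ((p : ℝ) ^ (b.den.factorization p)) =
      Real.log (b.den : ℝ) := by
    rw [← Real.log_prod (fun p hp => by
      have := (hTprime p hp).pos
      positivity)]
    congr 1
    have hsub : b.den.primeFactors ⊆ T := by
      rw [hT]
      exact Nat.primeFactors_mono (dvd_mul_left _ _) hdenpos.ne'
    have hprod : ∏ p ∈ T, p ^ (b.den.factorization p) = b.den := by
      conv_rhs => rw [← Nat.factorization_prod_pow_eq_self hbden]
      rw [Finsupp.prod]
      exact (Finset.prod_subset (by rw [Nat.support_factorization]; exact hsub)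
        (fun p _ hnp => by rw [Finsupp.notMem_support_iff.mp hnp, pow_zero])).symm
    calc ∏ p ∈ T, ((p : ℝ) ^ b.den.factorization p)
        = ((∏ p ∈ T, p ^ b.den.factorization p : ℕ) : ℝ) := by push_cast; ring
      _ = (b.den : ℝ) := by rw [hprod]
  have h3 : (∑' q : Nat.Primes, G (q : ℕ)) ≤ (1 / 2) * Real.log (b.den : ℝ) := by
    rw [htsum, hsum_eq]
    calc ∑ p ∈ T, G p ≤ ∑ p ∈ T, (1 / 2) * Real.log ((p : ℝ) ^ (b.den.factorization p)) :=
          hbound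
      _ = (1 / 2) * ∑ p ∈ T, Real.log ((p : ℝ) ^ (b.den.factorization p)) := by
          rw [Finset.mul_sum]
      _ = (1 / 2) * Real.log (b.den : ℝ) := by rw [hlogsum]
  have hdpos : (0 : ℝ) < (b.den : ℝ) := by exact_mod_cast b.pos
  have hiden : Real.log (max |(b : ℝ)| 1) + Real.log ((b.den : ℝ)) = h b := by
    rw [hh]
    have hmul : max |(b : ℝ)| 1 * (b.den : ℝ) = max (|((b.num : ℤ) : ℝ)|) ((b.den : ℕ) : ℝ) := by
      rw [max_mul_of_nonneg _ _ hdpos.le, one_mul]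
      congr 1
      have hbn : (b : ℝ) * (b.den : ℝ) = (b.num : ℝ) := by
        rw [Rat.cast_def]
        field_simp
      calc |(b : ℝ)| * (b.den : ℝ) = |(b : ℝ) * (b.den : ℝ)| := by
            rw [abs_mul, abs_of_pos hdpos]
        _ = |(b.num : ℝ)| := by rw [hbn]
    rw [← hmul, Real.log_mul (lt_of_lt_of_le one_pos (le_max_right _ _)).ne' hdpos.ne']
  have goal_eq : (∑' q : Nat.Primes,
      Real.log (max ((padicNorm (q : ℕ) x : ℝ)) (max ((padicNorm (q : ℕ) y : ℝ)) 1))) =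
      ∑' q : Nat.Primes, G (q : ℕ) := rfl
  rw [goal_eq]
  linarith [part2, h3, hiden]
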